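/- For any link e = {v,w} of Γ, the inequality Σ_{u ∈ V∖{v,w}} x_u ≥ 0 defines a face of P(Γ) whose vertices are exactly χ(∅), χ({v}), χ({w}) and χ({v,w}); in particular this face is 2-dimensional and χ({v,w}) is the unique vertex of P(Γ) other than χ(∅), χ({v}), χ({w}) lying on it. -/

import Mathlib

open Set

noncomputable section

variable {V : Type*}

/-- Characteristic vector of a set of nodes. -/
def chi (S : Set V) : V → ℝ := S.indicator (fun _ => (1 : ℝ))

/-- The candidate vertex set of the polytope `P(Γ)`. -/
def polyVerts (G : SimpleGraph V) : Set (V → ℝ) :=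
  {x | x = chi (∅ : Set V) ∨ (∃ v : V, x = chi {v}) ∨
        (∃ u w : V, G.Adj u w ∧ x = chi {u, w})}

/-- The polytope `P(Γ)`. -/
def poly (G : SimpleGraph V) : Set (V → ℝ) := convexHull ℝ (polyVerts G)

/-- Two points are adjacent vertices of a convex set `P` when the segment
joining them is a (1-dimensional) face, i.e. an extreme subset of `P`. -/
def AdjVert (P : Set (V → ℝ)) (p q : V → ℝ) : Prop :=
  p ≠ q ∧ IsExtreme ℝ P (segment ℝ p q)

/-- A combinatorial automorphism of `P`: a bijection of the vertex (extreme point)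
set of `P` mapping the vertex set of each face onto the vertex set of some face. -/
def IsCombAut (P : Set (V → ℝ)) (σ : (V → ℝ) → (V → ℝ)) : Prop :=
  Set.BijOn σ (P.extremePoints ℝ) (P.extremePoints ℝ) ∧
  ∀ F : Set (V → ℝ), IsExtreme ℝ P F →
    ∃ F' : Set (V → ℝ), IsExtreme ℝ P F' ∧
      σ '' (F ∩ P.extremePoints ℝ) = F' ∩ P.extremePoints ℝ

/-- An automorphism of the skeleton of `P`: a bijection of the vertex set of `P`
preserving adjacency (in both directions). -/
def IsSkelAut (P : Set (V → ℝ)) (σ : (V → ℝ) → (V → ℝ)) : Prop :=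
  Set.BijOn σ (P.extremePoints ℝ) (P.extremePoints ℝ) ∧
  ∀ p ∈ P.extremePoints ℝ, ∀ q ∈ P.extremePoints ℝ,
    (AdjVert P p q ↔ AdjVert P (σ p) (σ q))

namespace Stmt17Aux

lemma chi_apply (S : Set V) (u : V) [Decidable (u ∈ S)] :
    chi S u = if u ∈ S then 1 else 0 := by
  simp [chi, Set.indicator_apply]

lemma chi_nonneg (S : Set V) (u : V) : 0 ≤ chi S u := by
  classical
  rw [chi_apply]; split <;> norm_num

lemma chi_mem01 (S : Set V) (u : V) : chi S u = 0 ∨ chi S u = 1 := by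
  classical
  rw [chi_apply]; split <;> simp

lemma chi_empty : chi (∅ : Set V) = 0 := by
  funext u; simp [chi]

lemma chi_singleton [DecidableEq V] (a u : V) :
    chi ({a} : Set V) u = if u = a then 1 else 0 := by
  classical rw [chi_apply]; simp

lemma chi_pair (a b : V) (hab : a ≠ b) :
    chi ({a, b} : Set V) = chi {a} + chi {b} := by
  classical
  funext u
  simp only [Pi.add_apply, chi_apply, Set.mem_insert_iff, Set.mem_singleton_iff]
  rcases eq_or_ne u a with rfl | ha <;> rcases eq_or_ne u b with rfl | hb <;>
    simp_all

variable [Fintype V] [DecidableEq V]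

/-- The linear functional `x ↦ ∑ u ∈ s, x u`. -/
def sumF (s : Finset V) : (V → ℝ) →ₗ[ℝ] ℝ where
  toFun x := ∑ u ∈ s, x u
  map_add' x y := by simp [Finset.sum_add_distrib]
  map_smul' c x := by simp [Finset.mul_sum]

lemma sumF_apply (s : Finset V) (x : V → ℝ) : sumF s x = ∑ u ∈ s, x u := rfl

lemma sumF_chi_singleton (s : Finset V) (a : V) :
    sumF s (chi {a}) = if a ∈ s then 1 else 0 := by
  simp [sumF_apply, chi_singleton, Finset.sum_ite_eq']

lemma sumF_nonneg_of_nonneg (s : Finset V) {x : V → ℝ} (hx : ∀ u, 0 ≤ x u) :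
    0 ≤ sumF s x :=
  Finset.sum_nonneg fun u _ => hx u

lemma polyVerts_nonneg {G : SimpleGraph V} {x : V → ℝ} (hx : x ∈ polyVerts G) :
    ∀ u, 0 ≤ x u := by
  rcases hx with rfl | ⟨a, rfl⟩ | ⟨a, b, _, rfl⟩ <;> exact fun u => chi_nonneg _ u

lemma poly_subset_cube (G : SimpleGraph V) :
    poly G ⊆ {x | ∀ u, x u ∈ Set.Icc (0 : ℝ) 1} := by
  apply convexHull_min
  · rintro x hx u
    refine ⟨polyVerts_nonneg hx u, ?_⟩
    have h1 : ∀ (S : Set V), chi S u ≤ 1 := fun S => by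
      rcases chi_mem01 S u with h | h <;> rw [h] <;> norm_num
    rcases hx with rfl | ⟨a, rfl⟩ | ⟨a, b, _, rfl⟩ <;> exact h1 _
  · intro x hx y hy a b ha hb hab u
    have h1 := hx u; have h2 := hy u
    simp only [Set.mem_Icc] at *
    constructor
    · have := add_nonneg (mul_nonneg ha h1.1) (mul_nonneg hb h2.1)
      simpa using this
    · have : a * x u + b * y u ≤ a * 1 + b * 1 := by gcongr; exacts [h1.2, h2.2]
      simpa [hab] using this.trans_eq (by linarith)

/-- A 0/1 point of the polytope is an extreme point. -/
lemma mem_extremePoints_of_01 {G : SimpleGraph V} {x : V → ℝ}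
    (hx : x ∈ poly G) (h01 : ∀ u, x u = 0 ∨ x u = 1) :
    x ∈ (poly G).extremePoints ℝ := by
  refine ⟨hx, fun x₁ hx₁ x₂ hx₂ hseg => ?_⟩
  obtain ⟨a, b, ha, hb, hab, hx'⟩ := hseg
  have h1 := poly_subset_cube G hx₁
  have h2 := poly_subset_cube G hx₂
  have heq : ∀ u, x₁ u = x u ∧ x₂ u = x u := by
    intro u
    have hco : a * x₁ u + b * x₂ u = x u := by
      have := congrFun hx' u; simpa using this
    obtain ⟨h10, h11⟩ := h1 u
    obtain ⟨h20, h21⟩ := h2 u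
    rcases h01 u with h0 | h0 <;> rw [h0] at hco ⊢ <;> constructor <;> nlinarith
  exact funext fun u => (heq u).1

end Stmt17Aux

open Stmt17Aux in
theorem stmt17 [Fintype V] [DecidableEq V] (G : SimpleGraph V) {v w : V}
    (h : G.Adj v w) :
    (∀ x ∈ poly G, 0 ≤ ∑ u ∈ Finset.univ \ {v, w}, x u) ∧
    IsExtreme ℝ (poly G)
      {x ∈ poly G | ∑ u ∈ Finset.univ \ {v, w}, x u = 0} ∧
    {x ∈ poly G | ∑ u ∈ Finset.univ \ {v, w}, x u = 0} ∩
        (poly G).extremePoints ℝ =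
      {chi (∅ : Set V), chi ({v} : Set V), chi ({w} : Set V),
        chi ({v, w} : Set V)} ∧
    Module.finrank ℝ
      (affineSpan ℝ
        {x ∈ poly G | ∑ u ∈ Finset.univ \ {v, w}, x u = 0}).direction = 2 := by
  classical
  have hvw : v ≠ w := h.ne
  set s : Finset V := Finset.univ \ {v, w} with hs
  -- basic values of the functional
  have hsv : v ∉ s := by simp [hs]
  have hsw : w ∉ s := by simp [hs]
  have hFempty : sumF s (chi (∅ : Set V)) = 0 := by simp [chi_empty]
  have hFv : sumF s (chi ({v} : Set V)) = 0 := by simp [sumF_chi_singleton, hsv]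
  have hFw : sumF s (chi ({w} : Set V)) = 0 := by simp [sumF_chi_singleton, hsw]
  have hFvw : sumF s (chi ({v, w} : Set V)) = 0 := by
    rw [chi_pair v w hvw, map_add, hFv, hFw]; ring
  -- part 1
  have part1 : ∀ x ∈ poly G, 0 ≤ sumF s x := by
    intro x hx
    have hsub : poly G ⊆ {y | (0:ℝ) ≤ sumF s y} := by
      apply convexHull_min
      · intro y hy
        exact sumF_nonneg_of_nonneg s (polyVerts_nonneg hy)
      · exact convex_halfSpace_ge (sumF s).isLinear 0
    exact hsub hx
  have hnot : ∀ a : V, a ∉ s → a = v ∨ a = w := by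
    intro a ha
    simp only [hs, Finset.mem_sdiff, Finset.mem_univ, true_and, not_not,
      Finset.mem_insert, Finset.mem_singleton] at ha
    exact ha
  set Face : Set (V → ℝ) := {x ∈ poly G | ∑ u ∈ Finset.univ \ {v, w}, x u = 0}
    with hFace
  have hFace' : Face = {x ∈ poly G | sumF s x = 0} := rfl
  -- part 2 : extreme
  have part2 : IsExtreme ℝ (poly G) Face := by
    constructor
    · exact fun x hx => hx.1
    · rintro x₁ hx₁ x₂ hx₂ x ⟨hxp, hx0⟩ hseg
      obtain ⟨a, b, ha, hb, hab, hx'⟩ := hseg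
      have e1 : 0 ≤ sumF s x₁ := part1 _ hx₁
      have e2 : 0 ≤ sumF s x₂ := part1 _ hx₂
      have hx0' : sumF s x = 0 := hx0
      have hc : a * sumF s x₁ + b * sumF s x₂ = 0 := by
        have : sumF s (a • x₁ + b • x₂) = sumF s x := by rw [hx']
        rw [map_add, map_smul, map_smul] at this
        simpa [hx0', smul_eq_mul] using this
      have z1 : sumF s x₁ = 0 := by nlinarith
      have z2 : sumF s x₂ = 0 := by nlinarith
      exact ⟨hx₁, z1⟩
  -- the four points
  set Q : Set (V → ℝ) :=
    {chi (∅ : Set V), chi ({v} : Set V), chi ({w} : Set V), chi ({v, w} : Set V)}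
    with hQ
  have hQverts : Q ⊆ polyVerts G := by
    rintro x (rfl | rfl | rfl | rfl)
    · exact Or.inl rfl
    · exact Or.inr (Or.inl ⟨v, rfl⟩)
    · exact Or.inr (Or.inl ⟨w, rfl⟩)
    · exact Or.inr (Or.inr ⟨v, w, h, rfl⟩)
  have hQface : Q ⊆ Face := by
    rintro x (rfl | rfl | rfl | rfl) <;>
      exact ⟨subset_convexHull ℝ _ (hQverts (by simp [hQ])), by
        first
          | exact hFempty
          | exact hFv
          | exact hFw
          | exact hFvw⟩
  -- Face is contained in the convex hull of Q
  have hFaceQ : Face ⊆ convexHull ℝ Q := by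
    rintro x ⟨hxp, hx0⟩
    have hx0' : sumF s x = 0 := hx0
    rw [poly, convexHull_eq] at hxp
    obtain ⟨ι, t, wt, z, hw0, hw1, hzs, hcm⟩ := hxp
    have hxsum : x = ∑ i ∈ t, wt i • z i := by
      rw [← hcm, Finset.centerMass_eq_of_sum_1 _ _ hw1]
    have hterm0 : ∀ i ∈ t, wt i * sumF s (z i) = 0 := by
      rw [← Finset.sum_eq_zero_iff_of_nonneg]
      · have : sumF s x = ∑ i ∈ t, wt i * sumF s (z i) := by
          rw [hxsum, map_sum]
          exact Finset.sum_congr rfl fun i _ => by rw [map_smul]; rfl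
        rw [← this, hx0']
      · intro i hi
        exact mul_nonneg (hw0 i hi)
          (sumF_nonneg_of_nonneg s (polyVerts_nonneg (hzs i hi)))
    have hzQ : ∀ i ∈ t, wt i ≠ 0 → z i ∈ Q := by
      intro i hi hwi
      have hFz : sumF s (z i) = 0 := by
        have := hterm0 i hi
        rcases mul_eq_zero.1 this with h' | h'
        · exact absurd h' hwi
        · exact h'
      rcases hzs i hi with hz | ⟨a, hz⟩ | ⟨a, b, hadj, hz⟩
      · rw [hz]; exact Or.inl rfl
      · rw [hz] at hFz ⊢
        rw [sumF_chi_singleton] at hFz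
        have has : a ∉ s := by by_contra hcon; rw [if_pos hcon] at hFz; norm_num at hFz
        have : a = v ∨ a = w := hnot a has
        rcases this with rfl | rfl
        · exact Or.inr (Or.inl rfl)
        · exact Or.inr (Or.inr (Or.inl rfl))
      · have hab : a ≠ b := hadj.ne
        rw [hz] at hFz ⊢
        rw [chi_pair a b hab, map_add, sumF_chi_singleton, sumF_chi_singleton] at hFz
        have has : a ∉ s ∧ b ∉ s := by
          constructor <;> by_contra hcon <;> rw [if_pos hcon] at hFz <;>
            split_ifs at hFz <;> norm_num at hFz
        have hav : a = v ∨ a = w := hnot a has.1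
        have hbv : b = v ∨ b = w := hnot b has.2
        have : ({a, b} : Set V) = {v, w} := by
          rcases hav with rfl | rfl <;> rcases hbv with rfl | rfl
          · exact absurd rfl hab
          · rfl
          · exact Set.pair_comm _ _
          · exact absurd rfl hab
        rw [this]
        exact Or.inr (Or.inr (Or.inr rfl))
    -- restrict to nonzero weights
    rw [← hcm, ← Finset.centerMass_filter_ne_zero (w := wt) z]
    apply Finset.centerMass_mem_convexHull
    · intro i hi
      exact hw0 i (Finset.mem_filter.1 hi).1
    · rw [Finset.sum_filter_ne_zero, hw1]; norm_num
    · intro i hi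
      obtain ⟨hit, hwi⟩ := Finset.mem_filter.1 hi
      exact hzQ i hit hwi
  -- part 3
  have part3 : Face ∩ (poly G).extremePoints ℝ = Q := by
    apply Set.Subset.antisymm
    · rintro x ⟨hxF, hxE⟩
      have hxV : x ∈ polyVerts G := extremePoints_convexHull_subset hxE
      have : x ∈ convexHull ℝ Q := hFaceQ hxF
      -- directly: x ∈ polyVerts and sumF s x = 0 gives x ∈ Q
      have hFz : sumF s x = 0 := hxF.2
      rcases hxV with hz | ⟨a, hz⟩ | ⟨a, b, hadj, hz⟩
      · rw [hz]; exact Or.inl rfl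
      · rw [hz] at hFz ⊢
        rw [sumF_chi_singleton] at hFz
        have has : a ∉ s := by by_contra hcon; rw [if_pos hcon] at hFz; norm_num at hFz
        have : a = v ∨ a = w := hnot a has
        rcases this with rfl | rfl
        · exact Or.inr (Or.inl rfl)
        · exact Or.inr (Or.inr (Or.inl rfl))
      · have hab : a ≠ b := hadj.ne
        rw [hz] at hFz ⊢
        rw [chi_pair a b hab, map_add, sumF_chi_singleton, sumF_chi_singleton] at hFz
        have has : a ∉ s ∧ b ∉ s := by
          constructor <;> by_contra hcon <;> rw [if_pos hcon] at hFz <;>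
            split_ifs at hFz <;> norm_num at hFz
        have hav : a = v ∨ a = w := hnot a has.1
        have hbv : b = v ∨ b = w := hnot b has.2
        have : ({a, b} : Set V) = {v, w} := by
          rcases hav with rfl | rfl <;> rcases hbv with rfl | rfl
          · exact absurd rfl hab
          · rfl
          · exact Set.pair_comm _ _
          · exact absurd rfl hab
        rw [this]
        exact Or.inr (Or.inr (Or.inr rfl))
    · intro x hx
      refine ⟨hQface hx, mem_extremePoints_of_01
        (subset_convexHull ℝ _ (hQverts hx)) ?_⟩
      rcases hx with rfl | rfl | rfl | rfl <;> exact fun u => chi_mem01 _ u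
  -- part 4
  have part4 : Module.finrank ℝ (affineSpan ℝ Face).direction = 2 := by
    have hspan : affineSpan ℝ Face = affineSpan ℝ Q := by
      apply le_antisymm
      · calc affineSpan ℝ Face ≤ affineSpan ℝ (convexHull ℝ Q) :=
              affineSpan_mono ℝ hFaceQ
          _ = affineSpan ℝ Q := affineSpan_convexHull Q
      · exact affineSpan_mono ℝ hQface
    rw [hspan, direction_affineSpan]
    have h0Q : chi (∅ : Set V) ∈ Q := Or.inl rfl
    rw [vectorSpan_eq_span_vsub_set_right ℝ h0Q]
    have himg : (fun x => x -ᵥ chi (∅ : Set V)) '' Q = Q := by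
      rw [chi_empty]
      simp [Set.image_id']
    rw [himg]
    have hQ0 : Q = insert 0 {chi ({v} : Set V), chi ({w} : Set V),
        chi ({v, w} : Set V)} := by
      rw [hQ, chi_empty]
    rw [hQ0, Submodule.span_insert_zero]
    have hspan2 : Submodule.span ℝ ({chi ({v} : Set V), chi ({w} : Set V),
        chi ({v, w} : Set V)} : Set (V → ℝ)) =
        Submodule.span ℝ ({chi ({v} : Set V), chi ({w} : Set V)} : Set (V → ℝ)) := by
      apply le_antisymm
      · rw [Submodule.span_le]
        rintro x (rfl | rfl | rfl)
        · exact Submodule.subset_span (Or.inl rfl)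
        · exact Submodule.subset_span (Or.inr rfl)
        · rw [chi_pair v w hvw]
          exact Submodule.add_mem _ (Submodule.subset_span (Or.inl rfl))
            (Submodule.subset_span (Or.inr rfl))
      · exact Submodule.span_mono (by intro x hx; rcases hx with rfl | rfl
                                      exacts [Or.inl rfl, Or.inr (Or.inl rfl)])
    rw [hspan2]
    have hli : LinearIndependent ℝ ![chi ({v} : Set V), chi ({w} : Set V)] := by
      rw [LinearIndependent.pair_iff]
      intro a b hab
      have e1 : chi ({v} : Set V) v = 1 := by rw [chi_singleton]; simp
      have e2 : chi ({w} : Set V) v = 0 := by rw [chi_singleton]; simp [hvw]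
      have e3 : chi ({v} : Set V) w = 0 := by rw [chi_singleton]; simp [hvw.symm]
      have e4 : chi ({w} : Set V) w = 1 := by rw [chi_singleton]; simp
      have hv' := congrFun hab v
      have hw' := congrFun hab w
      simp only [Pi.add_apply, Pi.smul_apply, smul_eq_mul, Pi.zero_apply,
        e1, e2, e3, e4] at hv' hw'
      constructor <;> linarith
    have hrange : Set.range ![chi ({v} : Set V), chi ({w} : Set V)] =
        ({chi ({v} : Set V), chi ({w} : Set V)} : Set (V → ℝ)) := by
      simp only [Matrix.range_cons, Matrix.range_empty, Set.union_empty,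
        Set.union_singleton]
      exact Set.pair_comm _ _
    rw [← hrange]
    rw [finrank_span_eq_card hli]
    simp
  exact ⟨part1, part2, part3, part4⟩
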